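/- For every s ∈ [0,1] the generating function Π(s) = ∑_{n=0}^∞ π_n s^n satisfies Π(s)·B_c(s) = π_0·[B_c(s) + s·(h − H(s))] + ∑_{k=1}^{c−1} π_k s^k (c−k) b_0 (1−s). In particular, if moreover ∑_{j≥2} (j−1) b_j < c·b_0 (so B_c(s) ≠ 0 for s ∈ [0,1)), then for every s ∈ [0,1): Π(s) = π_0·[1 + s(h − H(s))/B_c(s)] + (1/B_c(s))·∑_{k=1}^{c−1} π_k s^k (c−k) b_0 (1−s). -/

import Mathlib

open Set Filter Topology

/-- The generating function `B_i(s) = ∑_{j≥0} b_j s^j + (i-1) b_0 (1-s)`. -/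
noncomputable def Bi (b : ℕ → ℝ) (i : ℕ) (s : ℝ) : ℝ :=
  (∑' j : ℕ, b j * s ^ j) + ((i : ℝ) - 1) * b 0 * (1 - s)

/-- The generating function `H(s) = ∑_{j≥1} h_j s^j`. -/
noncomputable def Hgen (hh : ℕ → ℝ) (s : ℝ) : ℝ :=
  ∑' j : ℕ, hh (j + 1) * s ^ (j + 1)

private lemma summable_of_abs_le {f g : ℕ → ℝ} (hg : Summable g) (h : ∀ n, |f n| ≤ g n) :
    Summable f :=
  summable_abs_iff.mp (Summable.of_nonneg_of_le (fun n => abs_nonneg _) h hg)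

private lemma one_sub_pow_le' (s : ℝ) (h0 : 0 ≤ s) (h1 : s ≤ 1) :
    ∀ n : ℕ, 1 - s ^ n ≤ (n : ℝ) * (1 - s) := by
  intro n
  induction n with
  | zero => simp
  | succ k ih =>
    have hk : 0 ≤ s ^ k := pow_nonneg h0 k
    have hk1 : s ^ k ≤ 1 := pow_le_one₀ h0 h1
    rw [pow_succ]
    push_cast
    nlinarith

/-- The convolution coefficient `A n = ∑_{k=1}^{n-1} b_{n-k+1} π_k`. -/
noncomputable def Acoef (b π : ℕ → ℝ) (n : ℕ) : ℝ :=
  ∑ k ∈ Finset.Icc 1 (n - 1), b (n - k + 1) * π k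

set_option maxHeartbeats 3000000 in
private lemma part1_aux (c : ℕ) (hc : 1 ≤ c) (b : ℕ → ℝ)
    (hbnn : ∀ j : ℕ, j ≠ 1 → 0 ≤ b j) (hb0 : 0 < b 0)
    (hbsum : Summable b)
    (hh : ℕ → ℝ) (hhnn : ∀ j : ℕ, 0 ≤ hh (j + 1))
    (hhsum : Summable (fun j : ℕ => hh (j + 1)))
    (π : ℕ → ℝ) (hπnn : ∀ n : ℕ, 0 ≤ π n) (hπsum : Summable π)
    (heq0 : -(∑' j : ℕ, hh (j + 1)) * π 0 + b 0 * π 1 = 0)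
    (heqall : ∀ k : ℕ,
      hh (k + 1) * π 0 + Acoef b π (k + 1) +
        (b 1 - (((min (k + 1) c : ℕ) : ℝ) - 1) * b 0) * π (k + 1) +
        ((min (k + 2) c : ℕ) : ℝ) * b 0 * π (k + 2) = 0) :
    ∀ s ∈ Set.Icc (0 : ℝ) 1,
      (∑' n : ℕ, π n * s ^ n) * Bi b c s =
        π 0 * (Bi b c s + s * ((∑' j : ℕ, hh (j + 1)) - Hgen hh s)) +
          ∑ k ∈ Finset.Icc 1 (c - 1),
            π k * s ^ k * ((c : ℝ) - (k : ℝ)) * b 0 * (1 - s) := by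
  intro s hs
  obtain ⟨hs0, hs1⟩ := hs
  have hpow1 : ∀ n : ℕ, s ^ n ≤ 1 := fun n => pow_le_one₀ hs0 hs1
  have hpow0 : ∀ n : ℕ, 0 ≤ s ^ n := fun n => pow_nonneg hs0 n
  -- summabilities
  have Sπ : Summable (fun n => π n * s ^ n) := by
    refine summable_of_abs_le hπsum fun n => ?_
    rw [abs_of_nonneg (mul_nonneg (hπnn n) (hpow0 n))]
    calc π n * s ^ n ≤ π n * 1 := by
          exact mul_le_mul_of_nonneg_left (hpow1 n) (hπnn n)
      _ = π n := mul_one _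
  have Sπ1 : Summable (fun k => π (k + 1) * s ^ (k + 1)) := (summable_nat_add_iff (f := fun n => π n * s ^ n) 1).2 Sπ
  have Sπ2 : Summable (fun k => π (k + 2) * s ^ (k + 2)) := (summable_nat_add_iff (f := fun n => π n * s ^ n) 2).2 Sπ
  have Sb : Summable (fun j => b j * s ^ j) := by
    refine summable_of_abs_le (summable_abs_iff.mpr hbsum) fun j => ?_
    rw [abs_mul, abs_pow]
    calc |b j| * |s| ^ j ≤ |b j| * 1 := by
          refine mul_le_mul_of_nonneg_left (pow_le_one₀ (abs_nonneg s) ?_) (abs_nonneg _)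
          rw [abs_of_nonneg hs0]; exact hs1
      _ = |b j| := mul_one _
  have Sb2 : Summable (fun j => b (j + 2) * s ^ (j + 2)) := (summable_nat_add_iff (f := fun j => b j * s ^ j) 2).2 Sb
  have Shh : Summable (fun j => hh (j + 1) * s ^ (j + 1)) := by
    refine summable_of_abs_le hhsum fun j => ?_
    rw [abs_of_nonneg (mul_nonneg (hhnn j) (hpow0 _))]
    calc hh (j + 1) * s ^ (j + 1) ≤ hh (j + 1) * 1 :=
          mul_le_mul_of_nonneg_left (hpow1 _) (hhnn j)
      _ = hh (j + 1) := mul_one _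
  have hBtot : (∑' j : ℕ, b j * s ^ j) = b 0 + b 1 * s + ∑' j : ℕ, b (j + 2) * s ^ (j + 2) := by
    rw [Summable.tsum_eq_zero_add Sb, Summable.tsum_eq_zero_add ((summable_nat_add_iff (f := fun j => b j * s ^ j) 1).2 Sb)]
    norm_num
    ring
  -- Cauchy product
  have nPt : Summable (fun k => ‖π (k + 1) * s ^ (k + 1)‖) := by
    simpa only [Real.norm_eq_abs] using summable_abs_iff.mpr Sπ1
  have nBt : Summable (fun j => ‖b (j + 2) * s ^ (j + 2)‖) := by
    simpa only [Real.norm_eq_abs] using summable_abs_iff.mpr Sb2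
  have hPB : (∑' k : ℕ, π (k + 1) * s ^ (k + 1)) * (∑' j : ℕ, b (j + 2) * s ^ (j + 2)) =
      ∑' n : ℕ, ∑ k ∈ Finset.range (n + 1),
        (π (k + 1) * s ^ (k + 1)) * (b (n - k + 2) * s ^ (n - k + 2)) :=
    tsum_mul_tsum_eq_tsum_sum_range_of_summable_norm (f := fun k => π (k + 1) * s ^ (k + 1))
      (g := fun j => b (j + 2) * s ^ (j + 2)) nPt nBt
  have SC : Summable (fun n => ∑ k ∈ Finset.range (n + 1),
      (π (k + 1) * s ^ (k + 1)) * (b (n - k + 2) * s ^ (n - k + 2))) :=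
    summable_sum_mul_range_of_summable_norm' (f := fun k => π (k + 1) * s ^ (k + 1))
      (g := fun j => b (j + 2) * s ^ (j + 2)) nPt Sπ1 nBt Sb2
  have hinner : ∀ n : ℕ, ∑ k ∈ Finset.range (n + 1),
      (π (k + 1) * s ^ (k + 1)) * (b (n - k + 2) * s ^ (n - k + 2)) =
      Acoef b π (n + 2) * s ^ (n + 3) := by
    intro n
    unfold Acoef
    have hIcc : Finset.Icc 1 (n + 2 - 1) = Finset.Ico 1 (n + 2) := by
      rw [← Finset.Ico_add_one_right_eq_Icc]
      congr 1
    rw [show (n + 2 - 1) = n + 1 from rfl, ← Finset.Ico_add_one_right_eq_Icc,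
      Finset.sum_Ico_eq_sum_range]
    rw [show (n + 1 + 1 - 1) = n + 1 from rfl, Finset.sum_mul]
    refine Finset.sum_congr rfl fun i hi => ?_
    have hin : i ≤ n := by
      have := Finset.mem_range.mp hi; omega
    have e1 : n + 2 - (1 + i) + 1 = n - i + 2 := by omega
    have e2 : (i + 1) + (n - i + 2) = n + 3 := by omega
    rw [e1, ← e2, pow_add]
    ring
  -- the four summand families
  have S1 : Summable (fun k => hh (k + 1) * π 0 * s ^ (k + 2)) := by
    refine summable_of_abs_le (hhsum.mul_right (π 0)) fun k => ?_
    rw [abs_of_nonneg (mul_nonneg (mul_nonneg (hhnn k) (hπnn 0)) (hpow0 _))]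
    calc hh (k + 1) * π 0 * s ^ (k + 2) ≤ hh (k + 1) * π 0 * 1 :=
          mul_le_mul_of_nonneg_left (hpow1 _) (mul_nonneg (hhnn k) (hπnn 0))
      _ = hh (k + 1) * π 0 := mul_one _
  have S2 : Summable (fun k => Acoef b π (k + 1) * s ^ (k + 2)) := by
    have h' : Summable (fun n => Acoef b π (n + 2) * s ^ (n + 3)) := SC.congr hinner
    exact (summable_nat_add_iff (f := fun k => Acoef b π (k + 1) * s ^ (k + 2)) 1).1 h'
  have hcoef3 : ∀ k : ℕ, |b 1 - (((min (k + 1) c : ℕ) : ℝ) - 1) * b 0| ≤ |b 1| + (c : ℝ) * b 0 := by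
    intro k
    have h1 : (1 : ℝ) ≤ ((min (k + 1) c : ℕ) : ℝ) := by
      have : 1 ≤ min (k + 1) c := by omega
      exact_mod_cast this
    have h2 : ((min (k + 1) c : ℕ) : ℝ) ≤ (c : ℝ) := by
      have : min (k + 1) c ≤ c := min_le_right _ _
      exact_mod_cast this
    have := abs_sub (b 1) ((((min (k + 1) c : ℕ) : ℝ) - 1) * b 0)
    have habs : |(((min (k + 1) c : ℕ) : ℝ) - 1) * b 0| ≤ (c : ℝ) * b 0 := by
      rw [abs_mul, abs_of_nonneg (by linarith : (0:ℝ) ≤ ((min (k + 1) c : ℕ) : ℝ) - 1),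
        abs_of_nonneg hb0.le]
      nlinarith
    calc |b 1 - (((min (k + 1) c : ℕ) : ℝ) - 1) * b 0| ≤
          |b 1| + |(((min (k + 1) c : ℕ) : ℝ) - 1) * b 0| := abs_sub _ _
      _ ≤ |b 1| + (c : ℝ) * b 0 := by linarith
  have S3 : Summable (fun k =>
      (b 1 - (((min (k + 1) c : ℕ) : ℝ) - 1) * b 0) * π (k + 1) * s ^ (k + 2)) := by
    refine summable_of_abs_le (((summable_nat_add_iff (f := π) 1).2 hπsum).mul_left
      (|b 1| + (c : ℝ) * b 0)) fun k => ?_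
    rw [abs_mul, abs_mul, abs_of_nonneg (hπnn _), abs_of_nonneg (hpow0 _)]
    have h1 := hcoef3 k
    have h2 : π (k + 1) * s ^ (k + 2) ≤ π (k + 1) * 1 :=
      mul_le_mul_of_nonneg_left (hpow1 _) (hπnn _)
    have h3 : (0:ℝ) ≤ |b 1| + (c : ℝ) * b 0 := by positivity
    calc |b 1 - (((min (k + 1) c : ℕ) : ℝ) - 1) * b 0| * π (k + 1) * s ^ (k + 2)
        ≤ (|b 1| + (c : ℝ) * b 0) * (π (k + 1) * s ^ (k + 2)) := by
          rw [mul_assoc]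
          exact mul_le_mul_of_nonneg_right h1 (mul_nonneg (hπnn _) (hpow0 _))
      _ ≤ (|b 1| + (c : ℝ) * b 0) * π (k + 1) := by nlinarith [hπnn (k+1), hpow0 (k+2), hpow1 (k+2)]
  have S4 : Summable (fun k => ((min (k + 2) c : ℕ) : ℝ) * b 0 * π (k + 2) * s ^ (k + 2)) := by
    refine summable_of_abs_le (((summable_nat_add_iff (f := π) 2).2 hπsum).mul_left
      ((c : ℝ) * b 0)) fun k => ?_
    have hm0 : (0:ℝ) ≤ ((min (k + 2) c : ℕ) : ℝ) := by positivity
    have hmc : ((min (k + 2) c : ℕ) : ℝ) ≤ (c : ℝ) := by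
      exact_mod_cast min_le_right (k + 2) c
    have hπ' := hπnn (k + 2)
    rw [abs_of_nonneg (mul_nonneg (mul_nonneg (mul_nonneg hm0 hb0.le) hπ') (hpow0 _))]
    have h1 : ((min (k + 2) c : ℕ) : ℝ) * b 0 * π (k + 2) * s ^ (k + 2) ≤
        ((min (k + 2) c : ℕ) : ℝ) * b 0 * π (k + 2) :=
      mul_le_of_le_one_right (mul_nonneg (mul_nonneg hm0 hb0.le) hπ') (hpow1 _)
    have h3 : ((min (k + 2) c : ℕ) : ℝ) * b 0 * π (k + 2) ≤ (c : ℝ) * b 0 * π (k + 2) :=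
      mul_le_mul_of_nonneg_right (mul_le_mul_of_nonneg_right hmc hb0.le) hπ'
    linarith
  have S5 : Summable (fun k => ((min (k + 1) c : ℕ) : ℝ) * b 0 * π (k + 1) * s ^ (k + 1)) := by
    refine summable_of_abs_le (((summable_nat_add_iff (f := π) 1).2 hπsum).mul_left
      ((c : ℝ) * b 0)) fun k => ?_
    have hm0 : (0:ℝ) ≤ ((min (k + 1) c : ℕ) : ℝ) := by positivity
    have hmc : ((min (k + 1) c : ℕ) : ℝ) ≤ (c : ℝ) := by
      exact_mod_cast min_le_right (k + 1) c
    have hπ' := hπnn (k + 1)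
    rw [abs_of_nonneg (mul_nonneg (mul_nonneg (mul_nonneg hm0 hb0.le) hπ') (hpow0 _))]
    have h1 : ((min (k + 1) c : ℕ) : ℝ) * b 0 * π (k + 1) * s ^ (k + 1) ≤
        ((min (k + 1) c : ℕ) : ℝ) * b 0 * π (k + 1) :=
      mul_le_of_le_one_right (mul_nonneg (mul_nonneg hm0 hb0.le) hπ') (hpow1 _)
    have h3 : ((min (k + 1) c : ℕ) : ℝ) * b 0 * π (k + 1) ≤ (c : ℝ) * b 0 * π (k + 1) :=
      mul_le_mul_of_nonneg_right (mul_le_mul_of_nonneg_right hmc hb0.le) hπ'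
    linarith
  -- sum of the equations
  have hzero : (∑' k : ℕ, (hh (k + 1) * π 0 * s ^ (k + 2) + Acoef b π (k + 1) * s ^ (k + 2) +
      (b 1 - (((min (k + 1) c : ℕ) : ℝ) - 1) * b 0) * π (k + 1) * s ^ (k + 2) +
      ((min (k + 2) c : ℕ) : ℝ) * b 0 * π (k + 2) * s ^ (k + 2))) = 0 := by
    have hz : ∀ k : ℕ, hh (k + 1) * π 0 * s ^ (k + 2) + Acoef b π (k + 1) * s ^ (k + 2) +
        (b 1 - (((min (k + 1) c : ℕ) : ℝ) - 1) * b 0) * π (k + 1) * s ^ (k + 2) +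
        ((min (k + 2) c : ℕ) : ℝ) * b 0 * π (k + 2) * s ^ (k + 2) = 0 := fun k => by
      linear_combination s ^ (k + 2) * heqall k
    exact (tsum_congr hz).trans tsum_zero
  have hsplit4 : (∑' k : ℕ, (hh (k + 1) * π 0 * s ^ (k + 2) + Acoef b π (k + 1) * s ^ (k + 2) +
      (b 1 - (((min (k + 1) c : ℕ) : ℝ) - 1) * b 0) * π (k + 1) * s ^ (k + 2) +
      ((min (k + 2) c : ℕ) : ℝ) * b 0 * π (k + 2) * s ^ (k + 2))) =
      (∑' k : ℕ, hh (k + 1) * π 0 * s ^ (k + 2)) +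
      (∑' k : ℕ, Acoef b π (k + 1) * s ^ (k + 2)) +
      (∑' k : ℕ, (b 1 - (((min (k + 1) c : ℕ) : ℝ) - 1) * b 0) * π (k + 1) * s ^ (k + 2)) +
      (∑' k : ℕ, ((min (k + 2) c : ℕ) : ℝ) * b 0 * π (k + 2) * s ^ (k + 2)) := by
    rw [Summable.tsum_add ((S1.add S2).add S3) S4, Summable.tsum_add (S1.add S2) S3,
      Summable.tsum_add S1 S2]
  have hP1 : (∑' k : ℕ, hh (k + 1) * π 0 * s ^ (k + 2)) = π 0 * s * Hgen hh s := by
    have : ∀ k : ℕ, hh (k + 1) * π 0 * s ^ (k + 2) =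
        (hh (k + 1) * s ^ (k + 1)) * (π 0 * s) := fun k => by ring
    rw [tsum_congr this, tsum_mul_right]
    unfold Hgen
    ring
  have hP2 : (∑' k : ℕ, Acoef b π (k + 1) * s ^ (k + 2)) = (∑' k : ℕ, π (k + 1) * s ^ (k + 1)) * (∑' j : ℕ, b (j + 2) * s ^ (j + 2)) := by
    rw [Summable.tsum_eq_zero_add S2]
    have hA1 : Acoef b π (0 + 1) = 0 := by
      unfold Acoef
      simp
    rw [hA1, hPB, tsum_congr hinner]
    ring
  -- the key identity for T
  have hT : (∑' k : ℕ, π (k + 1) * s ^ (k + 1) * Bi b (min (k + 1) c) s) =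
      π 0 * s * ((∑' j : ℕ, hh (j + 1)) - Hgen hh s) := by
    have hsummand : ∀ k : ℕ, π (k + 1) * s ^ (k + 1) * Bi b (min (k + 1) c) s =
        (π (k + 1) * s ^ (k + 1)) * (∑' j : ℕ, b (j + 2) * s ^ (j + 2)) +
        (b 1 - (((min (k + 1) c : ℕ) : ℝ) - 1) * b 0) * π (k + 1) * s ^ (k + 2) +
        ((min (k + 1) c : ℕ) : ℝ) * b 0 * π (k + 1) * s ^ (k + 1) := by
      intro k
      unfold Bi
      rw [hBtot]
      ring
    have SA : Summable (fun k => (π (k + 1) * s ^ (k + 1)) * ∑' j : ℕ, b (j + 2) * s ^ (j + 2)) := Sπ1.mul_right _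
    rw [tsum_congr hsummand, Summable.tsum_add (SA.add S3) S5, Summable.tsum_add SA S3,
      tsum_mul_right]
    have h5 : (∑' k : ℕ, ((min (k + 1) c : ℕ) : ℝ) * b 0 * π (k + 1) * s ^ (k + 1)) =
        b 0 * π 1 * s + ∑' k : ℕ, ((min (k + 2) c : ℕ) : ℝ) * b 0 * π (k + 2) * s ^ (k + 2) := by
      rw [Summable.tsum_eq_zero_add S5]
      have : ((min (0 + 1) c : ℕ) : ℝ) = 1 := by
        rw [show min (0 + 1) c = 1 from min_eq_left hc]
        norm_num
      rw [this]
      congr 1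
      norm_num
    rw [h5]
    have hb0π1 : b 0 * π 1 = (∑' j : ℕ, hh (j + 1)) * π 0 := by linarith [heq0]
    have := hsplit4 ▸ hzero
    rw [hP1, hP2] at this
    linear_combination this + s * hb0π1
  -- conclude part 1
  have hsplit : ∀ k : ℕ, π (k + 1) * s ^ (k + 1) * Bi b c s =
      π (k + 1) * s ^ (k + 1) * Bi b (min (k + 1) c) s +
      π (k + 1) * s ^ (k + 1) * (((c : ℝ) - ((min (k + 1) c : ℕ) : ℝ)) * b 0 * (1 - s)) := by
    intro k
    unfold Bi
    ring
  have SminT : Summable (fun k => π (k + 1) * s ^ (k + 1) * Bi b (min (k + 1) c) s) := by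
    have hsummand : ∀ k : ℕ, π (k + 1) * s ^ (k + 1) * Bi b (min (k + 1) c) s =
        (π (k + 1) * s ^ (k + 1)) * (∑' j : ℕ, b (j + 2) * s ^ (j + 2)) +
        (b 1 - (((min (k + 1) c : ℕ) : ℝ) - 1) * b 0) * π (k + 1) * s ^ (k + 2) +
        ((min (k + 1) c : ℕ) : ℝ) * b 0 * π (k + 1) * s ^ (k + 1) := by
      intro k
      unfold Bi
      rw [hBtot]
      ring
    exact (((Sπ1.mul_right (∑' j : ℕ, b (j + 2) * s ^ (j + 2))).add S3).add S5).congr fun k => (hsummand k).symm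
  have Sg5 : Summable (fun k => π (k + 1) * s ^ (k + 1) *
      (((c : ℝ) - ((min (k + 1) c : ℕ) : ℝ)) * b 0 * (1 - s))) := by
    apply summable_of_ne_finset_zero (s := Finset.range (c - 1))
    intro k hk
    have hkc : c ≤ k + 1 := by
      simp only [Finset.mem_range] at hk; omega
    rw [min_eq_right hkc]
    ring
  have hFin : (∑' k : ℕ, π (k + 1) * s ^ (k + 1) *
      (((c : ℝ) - ((min (k + 1) c : ℕ) : ℝ)) * b 0 * (1 - s))) =
      ∑ k ∈ Finset.Icc 1 (c - 1), π k * s ^ k * ((c : ℝ) - (k : ℝ)) * b 0 * (1 - s) := by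
    rw [tsum_eq_sum (s := Finset.range (c - 1)) (fun k hk => by
      have hkc : c ≤ k + 1 := by
        simp only [Finset.mem_range] at hk; omega
      rw [min_eq_right hkc]; ring)]
    rw [show Finset.Icc 1 (c - 1) = Finset.Ico 1 c by
      rw [← Finset.Ico_add_one_right_eq_Icc]; congr 1; omega]
    rw [Finset.sum_Ico_eq_sum_range]
    refine Finset.sum_congr (by congr 1) fun i hi => ?_
    have hic : i < c - 1 := Finset.mem_range.mp (by simpa using hi)
    have : min (i + 1) c = i + 1 := min_eq_left (by omega)
    rw [this, show (1 + i) = i + 1 by omega]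
    push_cast
    ring
  -- assemble
  rw [Summable.tsum_eq_zero_add Sπ]
  rw [pow_zero, mul_one, add_mul]
  have hPtB : (∑' k : ℕ, π (k + 1) * s ^ (k + 1)) * Bi b c s =
      (∑' k : ℕ, π (k + 1) * s ^ (k + 1) * Bi b c s) := (tsum_mul_right).symm
  rw [hPtB, tsum_congr hsplit, Summable.tsum_add SminT Sg5, hT, hFin]
  ring

set_option maxHeartbeats 1000000 in
private lemma Bi_pos_aux (c : ℕ) (b : ℕ → ℝ)
    (hbnn : ∀ j : ℕ, j ≠ 1 → 0 ≤ b j)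
    (hbsum : Summable b) (hbzero : (∑' j : ℕ, b j) = 0)
    (hM : Summable (fun j : ℕ => ((j : ℝ) + 1) * b (j + 2)))
    (hMlt : (∑' j : ℕ, ((j : ℝ) + 1) * b (j + 2)) < (c : ℝ) * b 0)
    (s : ℝ) (hs0 : 0 ≤ s) (hs1 : s < 1) : 0 < Bi b c s := by
  have hs1' : s ≤ 1 := hs1.le
  -- positivity of Bi b c s
  have Sb : Summable (fun j => b j * s ^ j) := by
    refine summable_of_abs_le (summable_abs_iff.mpr hbsum) fun j => ?_
    rw [abs_mul, abs_pow]
    calc |b j| * |s| ^ j ≤ |b j| * 1 := by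
          refine mul_le_mul_of_nonneg_left (pow_le_one₀ (abs_nonneg s) ?_) (abs_nonneg _)
          rw [abs_of_nonneg hs0]; exact hs1'
      _ = |b j| := mul_one _
  have Sb2 : Summable (fun j => b (j + 2) * s ^ (j + 2)) := (summable_nat_add_iff (f := fun j => b j * s ^ j) 2).2 Sb
  have Sbt : Summable (fun j : ℕ => b (j + 2)) := (summable_nat_add_iff (f := b) 2).2 hbsum
  have hb1eq : b 1 = -(b 0) - ∑' j : ℕ, b (j + 2) := by
    have h1 := Summable.tsum_eq_zero_add hbsum
    have h2 := Summable.tsum_eq_zero_add ((summable_nat_add_iff (f := b) 1).2 hbsum)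
    rw [hbzero] at h1
    rw [h2] at h1
    linarith
  have hBtot : (∑' j : ℕ, b j * s ^ j) = b 0 + b 1 * s + ∑' j : ℕ, b (j + 2) * s ^ (j + 2) := by
    rw [Summable.tsum_eq_zero_add Sb, Summable.tsum_eq_zero_add ((summable_nat_add_iff (f := fun j => b j * s ^ j) 1).2 Sb)]
    norm_num
    ring
  have Sdiff : Summable (fun j : ℕ => b (j + 2) * (s - s ^ (j + 2))) := by
    have : ∀ j : ℕ, b (j + 2) * (s - s ^ (j + 2)) =
        b (j + 2) * s - b (j + 2) * s ^ (j + 2) := fun j => by ring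
    exact ((Sbt.mul_right s).sub Sb2).congr fun j => (this j).symm
  have hBi : Bi b c s = (c : ℝ) * b 0 * (1 - s) - ∑' j : ℕ, b (j + 2) * (s - s ^ (j + 2)) := by
    have hsub : (∑' j : ℕ, b (j + 2) * (s - s ^ (j + 2))) =
        (∑' j : ℕ, b (j + 2)) * s - ∑' j : ℕ, b (j + 2) * s ^ (j + 2) := by
      rw [← tsum_mul_right]
      rw [← Summable.tsum_sub (Sbt.mul_right s) Sb2]
      exact tsum_congr fun j => by ring
    unfold Bi
    rw [hBtot, hb1eq, hsub]
    ring
  have hle : (∑' j : ℕ, b (j + 2) * (s - s ^ (j + 2))) ≤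
      (1 - s) * ∑' j : ℕ, ((j : ℝ) + 1) * b (j + 2) := by
    rw [← tsum_mul_left]
    refine Summable.tsum_le_tsum (fun j => ?_) Sdiff (hM.mul_left (1 - s))
    have hb' : 0 ≤ b (j + 2) := hbnn _ (by omega)
    have hp := one_sub_pow_le' s hs0 hs1' (j + 1)
    have e : s ^ (j + 2) = s ^ (j + 1) * s := pow_succ s (j + 1)
    have hnn : (0:ℝ) ≤ (1 - s) * (1 - s ^ (j + 1)) :=
      mul_nonneg (by linarith) (by nlinarith [pow_le_one₀ hs0 hs1' (n := j + 1)])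
    have hchain : s - s ^ (j + 2) ≤ ((j : ℝ) + 1) * (1 - s) := by
      rw [e]
      push_cast at hp ⊢
      nlinarith
    calc b (j + 2) * (s - s ^ (j + 2)) ≤ b (j + 2) * (((j : ℝ) + 1) * (1 - s)) :=
          mul_le_mul_of_nonneg_left hchain hb'
      _ = (1 - s) * (((j : ℝ) + 1) * b (j + 2)) := by ring
  rw [hBi]
  have h1s : 0 < 1 - s := by linarith
  have hmul := mul_lt_mul_of_pos_left hMlt h1s
  calc (0:ℝ) < (1 - s) * ((c : ℝ) * b 0) - (1 - s) * ∑' j : ℕ, ((j : ℝ) + 1) * b (j + 2) := by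
        linarith
    _ ≤ (c : ℝ) * b 0 * (1 - s) - ∑' j : ℕ, b (j + 2) * (s - s ^ (j + 2)) := by
        linarith [hle]

theorem stmt11 (c : ℕ) (hc : 1 ≤ c) (b : ℕ → ℝ)
    (hbnn : ∀ j : ℕ, j ≠ 1 → 0 ≤ b j) (hb0 : 0 < b 0)
    (hbsum : Summable b) (hbzero : (∑' j : ℕ, b j) = 0)
    (hb2 : 0 < ∑' j : ℕ, b (j + 2))
    (hh : ℕ → ℝ) (hhnn : ∀ j : ℕ, 0 ≤ hh (j + 1))
    (hhsum : Summable (fun j : ℕ => hh (j + 1)))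
    (hhpos : 0 < ∑' j : ℕ, hh (j + 1))
    (π : ℕ → ℝ) (hπnn : ∀ n : ℕ, 0 ≤ π n) (hπsum : Summable π)
    (heq0 : -(∑' j : ℕ, hh (j + 1)) * π 0 + b 0 * π 1 = 0)
    (heqmid : ∀ n : ℕ, 1 ≤ n → n ≤ c - 1 →
      hh n * π 0 + (∑ k ∈ Finset.Icc 1 (n - 1), b (n - k + 1) * π k) +
        (b 1 - ((n : ℝ) - 1) * b 0) * π n + ((n : ℝ) + 1) * b 0 * π (n + 1) = 0)
    (heqtail : ∀ n : ℕ, c ≤ n →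
      hh n * π 0 + (∑ k ∈ Finset.Icc 1 (n - 1), b (n - k + 1) * π k) +
        (b 1 - ((c : ℝ) - 1) * b 0) * π n + (c : ℝ) * b 0 * π (n + 1) = 0) :
    (∀ s ∈ Set.Icc (0 : ℝ) 1,
      (∑' n : ℕ, π n * s ^ n) * Bi b c s =
        π 0 * (Bi b c s + s * ((∑' j : ℕ, hh (j + 1)) - Hgen hh s)) +
          ∑ k ∈ Finset.Icc 1 (c - 1),
            π k * s ^ k * ((c : ℝ) - (k : ℝ)) * b 0 * (1 - s)) ∧
    ((Summable (fun j : ℕ => ((j : ℝ) + 1) * b (j + 2)) ∧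
        (∑' j : ℕ, ((j : ℝ) + 1) * b (j + 2)) < (c : ℝ) * b 0) →
      ∀ s ∈ Set.Ico (0 : ℝ) 1,
        (∑' n : ℕ, π n * s ^ n) =
          π 0 * (1 + s * ((∑' j : ℕ, hh (j + 1)) - Hgen hh s) / Bi b c s) +
            (1 / Bi b c s) *
              ∑ k ∈ Finset.Icc 1 (c - 1),
                π k * s ^ k * ((c : ℝ) - (k : ℝ)) * b 0 * (1 - s)) := by
  -- the combined balance equation, for all n = k+1 ≥ 1
  have heqall : ∀ k : ℕ,
      hh (k + 1) * π 0 + Acoef b π (k + 1) +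
        (b 1 - (((min (k + 1) c : ℕ) : ℝ) - 1) * b 0) * π (k + 1) +
        ((min (k + 2) c : ℕ) : ℝ) * b 0 * π (k + 2) = 0 := by
    intro k
    by_cases hkc : k + 1 ≤ c - 1
    · have h1 : min (k + 1) c = k + 1 := min_eq_left (by omega)
      have h2 : min (k + 2) c = k + 2 := min_eq_left (by omega)
      have := heqmid (k + 1) (by omega) hkc
      rw [h1, h2]
      unfold Acoef
      push_cast at this ⊢
      linarith
    · have hck : c ≤ k + 1 := by omega
      have h1 : min (k + 1) c = c := min_eq_right hck
      have h2 : min (k + 2) c = c := min_eq_right (by omega)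
      have := heqtail (k + 1) hck
      rw [h1, h2]
      unfold Acoef
      linarith
  have part1 := part1_aux c hc b hbnn hb0 hbsum hh hhnn hhsum π hπnn hπsum heq0 heqall
  refine ⟨part1, ?_⟩
  rintro ⟨hM, hMlt⟩ s ⟨hs0, hs1⟩
  have hs1' : s ≤ 1 := hs1.le
  have hBipos : 0 < Bi b c s := Bi_pos_aux c b hbnn hbsum hbzero hM hMlt s hs0 hs1
  have hne : Bi b c s ≠ 0 := ne_of_gt hBipos
  have key := part1 s ⟨hs0, hs1'⟩
  field_simp
  linear_combination key
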